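/- Let Z be a standard normal random variable, let g : ℝ → ℝ be a bounded continuously differentiable function with bounded derivative, and let U_o g (t) = e^{t²/2} ∫_{−∞}^{t} [g(x) − E g(Z)] e^{−x²/2} dx. Then U_o g is twice differentiable and ‖(U_o g)″‖_∞ ≤ 2 ‖g′‖_∞. -/

import Mathlib

open MeasureTheory ProbabilityTheory

/-- `E g(Z)` for `Z` standard normal. -/
noncomputable def gaussMean (g : ℝ → ℝ) : ℝ :=
  ∫ x, g x ∂(gaussianReal 0 1)

/-- Stein's operator: `U_o g (t) = e^{t²/2} ∫_{-∞}^t (g(x) - E g(Z)) e^{-x²/2} dx`. -/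
noncomputable def steinUo (g : ℝ → ℝ) (t : ℝ) : ℝ :=
  Real.exp (t ^ 2 / 2) * ∫ x in Set.Iic t, (g x - gaussMean g) * Real.exp (-x ^ 2 / 2)

open MeasureTheory ProbabilityTheory Real Set Filter Topology NNReal ENNReal

noncomputable def sphi (x : ℝ) : ℝ := Real.exp (-x ^ 2 / 2)

lemma sphi_pos (x : ℝ) : 0 < sphi x := Real.exp_pos _

lemma continuous_sphi : Continuous sphi := by unfold sphi; fun_prop

lemma integrable_sphi : Integrable sphi := by
  have h := integrable_exp_neg_mul_sq (by norm_num : (0:ℝ) < 1/2)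
  refine h.congr (Eventually.of_forall fun x => ?_)
  unfold sphi; ring_nf

lemma integral_sphi : ∫ x, sphi x = Real.sqrt (2 * π) := by
  have h := integral_gaussian (1/2)
  rw [show π / (1/2 : ℝ) = 2 * π by ring] at h
  rw [← h]
  congr 1; funext x; unfold sphi; ring_nf

lemma integrable_id_mul_sphi : Integrable (fun x => x * sphi x) := by
  have h := integrable_rpow_mul_exp_neg_mul_sq (by norm_num : (0:ℝ) < 1/2) (by norm_num : (-1:ℝ) < 1)
  simp only [Real.rpow_one] at h
  refine h.congr (Eventually.of_forall fun x => ?_)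
  unfold sphi; ring_nf

lemma hasDerivAt_sphi (x : ℝ) : HasDerivAt sphi (-x * sphi x) x := by
  have h1 : HasDerivAt (fun y : ℝ => -y ^ 2 / 2) (-x) x := by
    have := ((hasDerivAt_pow 2 x).neg).div_const 2
    simpa using this.congr_deriv (by ring)
  have := h1.exp
  show HasDerivAt (fun y => Real.exp (-y ^ 2 / 2)) (-x * Real.exp (-x ^ 2 / 2)) x
  exact this.congr_deriv (by ring)

lemma tendsto_sphi_atTop : Tendsto sphi atTop (𝓝 0) := by
  apply Real.tendsto_exp_atBot.comp
  have h : Tendsto (fun y : ℝ => y ^ 2) atTop atTop := tendsto_pow_atTop two_ne_zero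
  have h2 : Tendsto (fun y : ℝ => -y ^ 2) atTop atBot := tendsto_neg_atBot_iff.mpr h
  exact h2.atBot_div_const (by norm_num)

lemma tendsto_sphi_atBot : Tendsto sphi atBot (𝓝 0) := by
  have h := tendsto_sphi_atTop.comp tendsto_neg_atBot_atTop
  refine h.congr fun y => ?_
  simp [sphi, Function.comp]

lemma integral_Ioi_id_mul_sphi (t : ℝ) : ∫ x in Ioi t, x * sphi x = sphi t := by
  have htend : Tendsto (fun y => -sphi y) atTop (𝓝 0) := by
    simpa using tendsto_sphi_atTop.neg
  have h := integral_Ioi_of_hasDerivAt_of_tendsto (f := fun y => -sphi y)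
      (f' := fun x => x * sphi x) (a := t) (m := 0)
      ((continuous_sphi.neg).continuousWithinAt)
      (fun x _ => (hasDerivAt_sphi x).neg.congr_deriv (by ring))
      (integrable_id_mul_sphi.integrableOn)
      htend
  simpa using h

lemma integral_Iic_neg_id_mul_sphi (t : ℝ) : ∫ x in Iic t, -(x * sphi x) = sphi t := by
  have h := integral_Iic_of_hasDerivAt_of_tendsto (f := sphi)
      (f' := fun x => -(x * sphi x)) (a := t) (m := 0)
      (continuous_sphi.continuousWithinAt)
      (fun x _ => (hasDerivAt_sphi x).congr_deriv (by ring))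
      ((integrable_id_mul_sphi.neg).integrableOn)
      tendsto_sphi_atBot
  simpa using h

lemma one_add_sq_pos (x : ℝ) : (0:ℝ) < 1 + x ^ 2 := by positivity

lemma hasDerivAt_steinG (x : ℝ) :
    HasDerivAt (fun y => -(y / (1 + y ^ 2) * sphi y))
      (sphi x * ((2 * x ^ 2 + x ^ 4 - 1) / (1 + x ^ 2) ^ 2)) x := by
  have h1 : HasDerivAt (fun y : ℝ => y / (1 + y ^ 2))
      ((1 * (1 + x ^ 2) - x * (2 * x ^ (2-1))) / (1 + x ^ 2) ^ 2) x :=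
    (hasDerivAt_id x).div ((hasDerivAt_pow 2 x).const_add 1) (one_add_sq_pos x).ne'
  have h2 := (h1.mul (hasDerivAt_sphi x)).neg
  refine h2.congr_deriv ?_
  have h3 : (1 + x ^ 2) ≠ 0 := (one_add_sq_pos x).ne'
  field_simp
  ring

lemma tail_lb (t : ℝ) : t ≤ (1 + t ^ 2) * Real.exp (t ^ 2 / 2) * ∫ x in Ioi t, sphi x := by
  have hcont2 : Continuous (fun x : ℝ => (2 * x ^ 2 + x ^ 4 - 1) / (1 + x ^ 2) ^ 2) :=
    Continuous.div (by fun_prop) (by fun_prop) (fun x => (pow_pos (one_add_sq_pos x) 2).ne')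
  have hcontG : Continuous (fun y : ℝ => -(y / (1 + y ^ 2) * sphi y)) :=
    ((continuous_id.div (by fun_prop) (fun x => (one_add_sq_pos x).ne')).mul continuous_sphi).neg
  have hint : IntegrableOn (fun x => sphi x * ((2 * x ^ 2 + x ^ 4 - 1) / (1 + x ^ 2) ^ 2)) (Ioi t) := by
    refine (Integrable.mono' integrable_sphi ?_ (Eventually.of_forall fun x => ?_)).integrableOn
    · exact (continuous_sphi.mul hcont2).aestronglyMeasurable
    · rw [Real.norm_eq_abs, abs_mul, abs_of_pos (sphi_pos x)]
      have h1 : |(2 * x ^ 2 + x ^ 4 - 1) / (1 + x ^ 2) ^ 2| ≤ 1 := by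
        rw [abs_div, abs_of_pos (pow_pos (one_add_sq_pos x) 2), div_le_one (pow_pos (one_add_sq_pos x) 2)]
        rw [abs_le]; constructor <;> nlinarith [sq_nonneg x, sq_nonneg (x^2)]
      nlinarith [sphi_pos x]
  have htend : Tendsto (fun y => -(y / (1 + y ^ 2) * sphi y)) atTop (𝓝 0) := by
    apply squeeze_zero_norm (fun y => ?_) tendsto_sphi_atTop
    rw [norm_neg, Real.norm_eq_abs, abs_mul, abs_of_pos (sphi_pos y)]
    have : |y / (1 + y ^ 2)| ≤ 1 := by
      rw [abs_div, abs_of_pos (one_add_sq_pos y), div_le_one (one_add_sq_pos y)]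
      nlinarith [abs_nonneg y, sq_abs y]
    nlinarith [sphi_pos y, abs_nonneg (y / (1 + y^2))]
  have h := integral_Ioi_of_hasDerivAt_of_tendsto
      (f := fun y => -(y / (1 + y ^ 2) * sphi y))
      (f' := fun x => sphi x * ((2 * x ^ 2 + x ^ 4 - 1) / (1 + x ^ 2) ^ 2)) (a := t) (m := 0)
      hcontG.continuousWithinAt
      (fun x _ => hasDerivAt_steinG x) hint htend
  have hle : (∫ x in Ioi t, sphi x * ((2 * x ^ 2 + x ^ 4 - 1) / (1 + x ^ 2) ^ 2))
      ≤ ∫ x in Ioi t, sphi x := by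
    refine integral_mono hint integrable_sphi.integrableOn fun x => ?_
    have h2 : (2 * x ^ 2 + x ^ 4 - 1) / (1 + x ^ 2) ^ 2 ≤ 1 := by
      rw [div_le_one (pow_pos (one_add_sq_pos x) 2)]; nlinarith
    nlinarith [sphi_pos x]
  rw [h] at hle
  simp only [sub_neg_eq_add, zero_add] at hle
  have hc : (0:ℝ) < (1 + t ^ 2) * Real.exp (t ^ 2 / 2) := by positivity
  have hfin := mul_le_mul_of_nonneg_left hle hc.le
  refine le_trans (le_of_eq ?_) hfin
  rw [sphi, ← mul_assoc]
  rw [show (1 + t ^ 2) * Real.exp (t ^ 2 / 2) * (t / (1 + t ^ 2)) = t * Real.exp (t^2/2) * ((1+t^2) / (1+t^2)) by ring]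
  rw [div_self (one_add_sq_pos t).ne', mul_one, mul_assoc, ← Real.exp_add]
  rw [show (t ^ 2 / 2 + -t ^ 2 / 2 : ℝ) = 0 from by ring, Real.exp_zero, mul_one]

lemma integral_Iic_sphi_eq (t : ℝ) : ∫ x in Iic t, sphi x = ∫ x in Ioi (-t), sphi x := by
  rw [show (∫ x in Iic t, sphi x) = ∫ x in Iic t, sphi (-x) from by
    congr 1; funext x; simp [sphi]]
  rw [integral_comp_neg_Iic]

lemma gaussMean_eq (g : ℝ → ℝ) :
    Real.sqrt (2 * π) * gaussMean g = ∫ x, g x * sphi x := by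
  rw [gaussMean, gaussianReal_of_var_ne_zero 0 one_ne_zero]
  rw [show gaussianPDF 0 1 = fun x => ((Real.toNNReal (gaussianPDFReal 0 1 x) : ℝ≥0) : ℝ≥0∞) from rfl]
  rw [integral_withDensity_eq_integral_smul ((measurable_gaussianPDFReal 0 1).real_toNNReal) g]
  rw [← integral_const_mul]
  congr 1; funext x
  rw [NNReal.smul_def, smul_eq_mul, Real.coe_toNNReal _ (gaussianPDFReal_nonneg 0 1 x)]
  rw [gaussianPDFReal]
  have h2 : Real.sqrt (2 * π) ≠ 0 := by positivity
  rw [sphi]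
  push_cast
  rw [mul_one, sub_zero]
  field_simp

/-- For `g` bounded `C¹` with bounded derivative, `U_o g` is twice
differentiable and `‖(U_o g)''‖_∞ ≤ 2 ‖g'‖_∞`. -/
theorem steinUo_second_deriv_sup_norm_bound
    (g : ℝ → ℝ) (hg : ContDiff ℝ 1 g)
    (hgb : ∃ C : ℝ, ∀ x : ℝ, |g x| ≤ C)
    (hgb' : ∃ C : ℝ, ∀ x : ℝ, |deriv g x| ≤ C) :
    Differentiable ℝ (steinUo g) ∧
    Differentiable ℝ (deriv (steinUo g)) ∧
    (⨆ t : ℝ, |deriv (deriv (steinUo g)) t|) ≤ 2 * (⨆ x : ℝ, |deriv g x|) := by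
  obtain ⟨C, hC⟩ := hgb
  obtain ⟨C', hC'⟩ := hgb'
  have hgc : Continuous g := hg.continuous
  have hgdiff : Differentiable ℝ g := hg.differentiable one_ne_zero
  set m : ℝ := gaussMean g with hm_def
  set L : ℝ := ⨆ x : ℝ, |deriv g x| with hL_def
  have hBdd : BddAbove (range fun x : ℝ => |deriv g x|) := ⟨C', by rintro _ ⟨x, rfl⟩; exact hC' x⟩
  have hL : ∀ x : ℝ, |deriv g x| ≤ L := fun x => le_ciSup hBdd x
  have hL0 : 0 ≤ L := le_trans (abs_nonneg _) (hL 0)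
  have hLip : ∀ x t : ℝ, |g x - g t| ≤ L * |x - t| := by
    intro x t
    have := convex_univ.norm_image_sub_le_of_norm_deriv_le
      (f := g) (fun y _ => hgdiff y) (fun y _ => by rw [Real.norm_eq_abs]; exact hL y)
      (mem_univ t) (mem_univ x)
    simpa [Real.norm_eq_abs] using this
  -- ψ
  set ψ : ℝ → ℝ := fun x => (g x - m) * sphi x with hψ_def
  have hψcont : Continuous ψ := (hgc.sub continuous_const).mul continuous_sphi
  have hψint : Integrable ψ :=
    integrable_sphi.bdd_mul (hgc.sub continuous_const).aestronglyMeasurable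
      (c := C + |m|) (Eventually.of_forall fun x => by
        rw [Real.norm_eq_abs]
        calc |g x - m| ≤ |g x| + |m| := abs_sub _ _
          _ ≤ C + |m| := by linarith [hC x])
  -- first derivative
  have hsUo : steinUo g = fun t => Real.exp (t ^ 2 / 2) * ∫ x in Iic t, ψ x := rfl
  have hasDerivI : ∀ t : ℝ, HasDerivAt (fun t => ∫ x in Iic t, ψ x) (ψ t) t := by
    intro t
    have key : (fun t : ℝ => ∫ x in Iic t, ψ x)
        = fun t : ℝ => (∫ x in Iic (0:ℝ), ψ x) + ∫ x in (0:ℝ)..t, ψ x := by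
      funext s
      rw [← intervalIntegral.integral_Iic_sub_Iic hψint.integrableOn hψint.integrableOn]
      ring
    rw [key]
    have h1 : IntervalIntegrable ψ volume 0 t := hψint.intervalIntegrable
    have h2 : StronglyMeasurableAtFilter ψ (𝓝 t) volume :=
      hψcont.stronglyMeasurable.stronglyMeasurableAtFilter
    exact (intervalIntegral.integral_hasDerivAt_right h1 h2 hψcont.continuousAt).const_add _
  have hEt1 : ∀ t : ℝ, Real.exp (t ^ 2 / 2) * sphi t = 1 := by
    intro t
    rw [sphi, ← Real.exp_add, show (t ^ 2 / 2 + -t ^ 2 / 2 : ℝ) = 0 from by ring, Real.exp_zero]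
  have hEexp : ∀ t : ℝ, HasDerivAt (fun t : ℝ => Real.exp (t ^ 2 / 2))
      (t * Real.exp (t ^ 2 / 2)) t := by
    intro t
    have h1 : HasDerivAt (fun y : ℝ => y ^ 2 / 2) t t := by
      have := (hasDerivAt_pow 2 t).div_const 2
      simpa using this.congr_deriv (by ring)
    simpa [mul_comm] using h1.exp
  have hf'each : ∀ t : ℝ, HasDerivAt (steinUo g) (t * steinUo g t + (g t - m)) t := by
    intro t
    have h := (hEexp t).mul (hasDerivI t)
    rw [show steinUo g = fun t => Real.exp (t ^ 2 / 2) * ∫ x in Iic t, ψ x from rfl]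
    refine h.congr_deriv ?_
    simp only [hψ_def]
    linear_combination (g t - m) * hEt1 t
  have hdiff1 : Differentiable ℝ (steinUo g) := fun t => (hf'each t).differentiableAt
  have hderiv1 : deriv (steinUo g) = fun t => t * steinUo g t + (g t - m) :=
    funext fun t => (hf'each t).deriv
  have hf''each : ∀ t : ℝ, HasDerivAt (fun s : ℝ => s * steinUo g s + (g s - m))
      ((1 + t ^ 2) * steinUo g t + t * (g t - m) + deriv g t) t := by
    intro t
    have h := ((hasDerivAt_id t).mul (hf'each t)).add ((hgdiff t).hasDerivAt.sub_const m)
    refine h.congr_deriv ?_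
    simp only [id]
    ring
  have hdiff2 : Differentiable ℝ (deriv (steinUo g)) := by
    rw [hderiv1]; exact fun t => (hf''each t).differentiableAt
  have hderiv2 : ∀ t : ℝ, deriv (deriv (steinUo g)) t
      = (1 + t ^ 2) * steinUo g t + t * (g t - m) + deriv g t := by
    intro t; rw [hderiv1]; exact (hf''each t).deriv
  -- Key pointwise bound
  have hkey : ∀ t : ℝ, |(1 + t ^ 2) * steinUo g t + t * (g t - m)| ≤ L := by
    intro t
    set S : ℝ := Real.sqrt (2 * π) with hS_def
    have hSpos : 0 < S := Real.sqrt_pos.mpr (by positivity)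
    set Gt : ℝ := ∫ x in Iic t, sphi x with hGt_def
    set Q : ℝ := ∫ x in Ioi t, sphi x with hQ_def
    have hGQ : Gt + Q = S := by
      rw [hGt_def, hQ_def, intervalIntegral.integral_Iic_add_Ioi integrable_sphi.integrableOn
        integrable_sphi.integrableOn, integral_sphi]
    have hQt : t ≤ (1 + t ^ 2) * Real.exp (t ^ 2 / 2) * Q := tail_lb t
    have hGtb : -t ≤ (1 + t ^ 2) * Real.exp (t ^ 2 / 2) * Gt := by
      have h := tail_lb (-t)
      rw [← integral_Iic_sphi_eq] at h
      rw [hGt_def]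
      simpa [neg_sq] using h
    -- integrabilities
    have hu_int : Integrable (fun x => (g x - g t) * sphi x) :=
      integrable_sphi.bdd_mul (hgc.sub continuous_const).aestronglyMeasurable
        (c := C + |g t|) (Eventually.of_forall fun x => by
          rw [Real.norm_eq_abs]
          calc |g x - g t| ≤ |g x| + |g t| := abs_sub _ _
            _ ≤ C + |g t| := by linarith [hC x])
    have hgint : Integrable (fun x => g x * sphi x) :=
      integrable_sphi.bdd_mul hgc.aestronglyMeasurable
        (c := C) (Eventually.of_forall fun x => by rw [Real.norm_eq_abs]; exact hC x)
    have hlinA : Integrable (fun x => (t - x) * sphi x) := by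
      refine ((integrable_sphi.const_mul t).sub integrable_id_mul_sphi).congr
        (Eventually.of_forall fun x => ?_)
      simp only [Pi.sub_apply]; ring
    have hlinB : Integrable (fun x => (x - t) * sphi x) := by
      refine (integrable_id_mul_sphi.sub (integrable_sphi.const_mul t)).congr
        (Eventually.of_forall fun x => ?_)
      simp only [Pi.sub_apply]; ring
    have hnegint : Integrable (fun x => -(x * sphi x)) := by
      exact (integrable_id_mul_sphi.neg).congr (Eventually.of_forall fun x => by
        simp only [Pi.neg_apply])
    -- moments
    have hMA : ∫ x in Iic t, (t - x) * sphi x = t * Gt + sphi t := by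
      have h1 : (∫ x in Iic t, (t - x) * sphi x)
          = (∫ x in Iic t, t * sphi x) + ∫ x in Iic t, -(x * sphi x) := by
        rw [← integral_add ((integrable_sphi.const_mul t).integrableOn)
          (hnegint.integrableOn)]
        congr 1; funext x; ring
      rw [h1, integral_Iic_neg_id_mul_sphi, integral_const_mul]
    have hMB : ∫ x in Ioi t, (x - t) * sphi x = sphi t - t * Q := by
      have h1 : (∫ x in Ioi t, (x - t) * sphi x)
          = (∫ x in Ioi t, x * sphi x) - ∫ x in Ioi t, t * sphi x := by
        rw [← integral_sub (integrable_id_mul_sphi.integrableOn)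
          ((integrable_sphi.const_mul t).integrableOn)]
        congr 1; funext x; ring
      rw [h1, integral_Ioi_id_mul_sphi, integral_const_mul]
    set A : ℝ := ∫ x in Iic t, (g x - g t) * sphi x with hA_def
    set B : ℝ := ∫ x in Ioi t, (g x - g t) * sphi x with hB_def
    have hA : |A| ≤ L * (t * Gt + sphi t) := by
      rw [← hMA, ← integral_const_mul]
      calc |A| ≤ ∫ x in Iic t, |g x - g t| * |sphi x| := by
            simpa [Real.norm_eq_abs, abs_mul] using norm_integral_le_integral_norm
              (μ := volume.restrict (Iic t)) (f := fun x => (g x - g t) * sphi x)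
        _ ≤ ∫ x in Iic t, L * ((t - x) * sphi x) := by
            refine setIntegral_mono_on (by simpa [abs_mul] using hu_int.abs.integrableOn)
              ((hlinA.const_mul L).integrableOn) measurableSet_Iic (fun x hx => ?_)
            rw [abs_of_pos (sphi_pos x)]
            have h2 : |g x - g t| ≤ L * (t - x) := by
              have h3 := hLip x t
              rwa [abs_of_nonpos (sub_nonpos.mpr (mem_Iic.mp hx)), neg_sub] at h3
            nlinarith [sphi_pos x, abs_nonneg (g x - g t)]
    have hB : |B| ≤ L * (sphi t - t * Q) := by
      rw [← hMB, ← integral_const_mul]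
      calc |B| ≤ ∫ x in Ioi t, |g x - g t| * |sphi x| := by
            simpa [Real.norm_eq_abs, abs_mul] using norm_integral_le_integral_norm
              (μ := volume.restrict (Ioi t)) (f := fun x => (g x - g t) * sphi x)
        _ ≤ ∫ x in Ioi t, L * ((x - t) * sphi x) := by
            refine setIntegral_mono_on (by simpa [abs_mul] using hu_int.abs.integrableOn)
              ((hlinB.const_mul L).integrableOn) measurableSet_Ioi (fun x hx => ?_)
            rw [abs_of_pos (sphi_pos x)]
            have h2 : |g x - g t| ≤ L * (x - t) := by
              have h3 := hLip x t
              rwa [abs_of_nonneg (sub_nonneg.mpr (le_of_lt (mem_Ioi.mp hx)))] at h3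
            nlinarith [sphi_pos x, abs_nonneg (g x - g t)]
    -- mean identity
    have hmid : S * (g t - m) = -(A + B) := by
      have h1 : ∫ x, (g t - g x) * sphi x = g t * S - S * m := by
        have h2 : (∫ x, (g t - g x) * sphi x)
            = (∫ x, g t * sphi x) - ∫ x, g x * sphi x := by
          rw [← integral_sub (integrable_sphi.const_mul (g t)) hgint]
          congr 1; funext x; ring
        rw [h2, integral_const_mul, integral_sphi, ← hS_def, ← gaussMean_eq g, ← hS_def, ← hm_def]
      have h2 : ∫ x, (g x - g t) * sphi x = A + B := by
        rw [hA_def, hB_def, intervalIntegral.integral_Iic_add_Ioi hu_int.integrableOn hu_int.integrableOn]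
      have h3 : ∫ x, (g t - g x) * sphi x = -(A + B) := by
        rw [← h2, ← integral_neg]
        congr 1; funext x; ring
      rw [h3] at h1
      linarith [h1]
    have hw : g t - m = -(A + B) / S := by
      rw [eq_div_iff hSpos.ne']
      linarith [hmid]
    have hIt : (∫ x in Iic t, ψ x) = A + (g t - m) * Gt := by
      calc (∫ x in Iic t, ψ x)
          = ∫ x in Iic t, ((g x - g t) * sphi x + (g t - m) * sphi x) := by
            congr 1; funext x; simp only [hψ_def]; ring
        _ = A + (g t - m) * Gt := by
            rw [integral_add hu_int.integrableOn
              ((integrable_sphi.const_mul _).integrableOn), integral_const_mul, hA_def, hGt_def]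
    have hR : (1 + t ^ 2) * steinUo g t + t * (g t - m)
        = ((1 + t ^ 2) * Real.exp (t ^ 2 / 2) * Q - t) / S * A
          - ((1 + t ^ 2) * Real.exp (t ^ 2 / 2) * Gt + t) / S * B := by
      have hst : steinUo g t = Real.exp (t ^ 2 / 2) * ∫ x in Iic t, ψ x := rfl
      rw [hst, hIt, hw]
      field_simp
      linear_combination (-(1 + t ^ 2) * Real.exp (t ^ 2 / 2) * A) * hGQ
    have ha1 : 0 ≤ ((1 + t ^ 2) * Real.exp (t ^ 2 / 2) * Q - t) / S :=
      div_nonneg (by linarith [hQt]) hSpos.le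
    have ha2 : 0 ≤ ((1 + t ^ 2) * Real.exp (t ^ 2 / 2) * Gt + t) / S :=
      div_nonneg (by linarith [hGtb]) hSpos.le
    have ha_sum : ((1 + t ^ 2) * Real.exp (t ^ 2 / 2) * Q - t) / S * (t * Gt + sphi t)
        + ((1 + t ^ 2) * Real.exp (t ^ 2 / 2) * Gt + t) / S * (sphi t - t * Q) = 1 := by
      field_simp
      linear_combination ((1 + t ^ 2) * (Q + Gt)) * hEt1 t + hGQ
    calc |(1 + t ^ 2) * steinUo g t + t * (g t - m)|
        = |((1 + t ^ 2) * Real.exp (t ^ 2 / 2) * Q - t) / S * A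
            - ((1 + t ^ 2) * Real.exp (t ^ 2 / 2) * Gt + t) / S * B| := by rw [hR]
      _ ≤ |((1 + t ^ 2) * Real.exp (t ^ 2 / 2) * Q - t) / S * A|
            + |((1 + t ^ 2) * Real.exp (t ^ 2 / 2) * Gt + t) / S * B| := abs_sub _ _
      _ = ((1 + t ^ 2) * Real.exp (t ^ 2 / 2) * Q - t) / S * |A|
            + ((1 + t ^ 2) * Real.exp (t ^ 2 / 2) * Gt + t) / S * |B| := by
          rw [abs_mul, abs_mul, abs_of_nonneg ha1, abs_of_nonneg ha2]
      _ ≤ ((1 + t ^ 2) * Real.exp (t ^ 2 / 2) * Q - t) / S * (L * (t * Gt + sphi t))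
            + ((1 + t ^ 2) * Real.exp (t ^ 2 / 2) * Gt + t) / S * (L * (sphi t - t * Q)) :=
          add_le_add (mul_le_mul_of_nonneg_left hA ha1) (mul_le_mul_of_nonneg_left hB ha2)
      _ = L * (((1 + t ^ 2) * Real.exp (t ^ 2 / 2) * Q - t) / S * (t * Gt + sphi t)
            + ((1 + t ^ 2) * Real.exp (t ^ 2 / 2) * Gt + t) / S * (sphi t - t * Q)) := by ring
      _ = L := by rw [ha_sum, mul_one]
  refine ⟨hdiff1, hdiff2, ?_⟩
  have hptw : ∀ t : ℝ, |deriv (deriv (steinUo g)) t| ≤ 2 * L := by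
    intro t
    rw [hderiv2 t]
    calc |(1 + t ^ 2) * steinUo g t + t * (g t - m) + deriv g t|
        ≤ |(1 + t ^ 2) * steinUo g t + t * (g t - m)| + |deriv g t| := abs_add_le _ _
      _ ≤ L + L := add_le_add (hkey t) (hL t)
      _ = 2 * L := by ring
  exact ciSup_le hptw
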